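/- Let μ be a probability measure with compact support whose Voiculescu transform has Laurent expansion φ_μ(z) = Σ_{l≥1} κ_l z^{1−l} near ∞, and suppose the even cumulants satisfy κ₂ = b > 0 and κ_{2l} = 0 for all l ≥ 2. Suppose further that φ_μ satisfies Σ_{j=1}^n a_j φ_μ(z/a_j) = Σ_{k=1}^n b_k φ_μ(z/b_k) for large z ∈ ℂ⁺, where a_j, b_k are nonzero reals, and that Λ₂(2l−1) := Σ_j a_j^{2l−1} − Σ_k b_k^{2l−1} ≠ 0 for all l ≥ 2. Then κ_{2l−1} = 0 for all l ≥ 2, i.e., φ_μ(z) = κ₁ + b/z, so μ is a semicircular measure. -/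

import Mathlib

open MeasureTheory

set_option maxHeartbeats 1000000

open Filter

lemma aux_coeffs_zero (c : ℕ → ℂ) (R : ℝ) (hR : 0 < R)
    (h : ∀ z : ℂ, 0 < z.im → R < ‖z‖ →
      HasSum (fun j : ℕ => c j * (z⁻¹) ^ j) 0) :
    ∀ m, c m = 0 := by
  -- geometric bound on coefficients from summability at z₀ = I * (2R)
  have hz0im : (0:ℝ) < (Complex.I * ((2*R : ℝ) : ℂ)).im := by
    simp [Complex.mul_im]
    linarith
  have hz0abs : ‖Complex.I * ((2*R : ℝ) : ℂ)‖ = 2*R := by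
    rw [norm_mul, Complex.norm_I, Complex.norm_real, Real.norm_eq_abs, one_mul, abs_of_pos (by linarith : (0:ℝ) < 2*R)]
  have h0 := h (Complex.I * ((2*R : ℝ) : ℂ)) hz0im (by rw [hz0abs]; linarith)
  have hs0 : Summable (fun j : ℕ => ‖c j * ((Complex.I * ((2*R:ℝ):ℂ))⁻¹) ^ j‖) :=
    (summable_norm_iff).2 h0.summable
  set C : ℝ := ∑' j : ℕ, ‖c j * ((Complex.I * ((2*R:ℝ):ℂ))⁻¹) ^ j‖ with hCdef
  have hC0 : 0 ≤ C := tsum_nonneg (fun j => norm_nonneg _)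
  have hC : ∀ j, ‖c j‖ ≤ C * (2*R)^j := by
    intro j
    have h1 : ‖c j * ((Complex.I * ((2*R:ℝ):ℂ))⁻¹) ^ j‖ ≤ C :=
      Summable.le_tsum hs0 j (fun i _ => norm_nonneg _)
    have h2 : ‖c j * ((Complex.I * ((2*R:ℝ):ℂ))⁻¹) ^ j‖ = ‖c j‖ * ((2*R)⁻¹)^j := by
      rw [norm_mul, norm_pow, norm_inv]
      congr 2
      simpa using hz0abs
    rw [h2] at h1
    have h3 : (0:ℝ) < ((2*R)⁻¹)^j := by positivity
    calc ‖c j‖ = ‖c j‖ * ((2*R)⁻¹)^j * (2*R)^j := by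
          rw [mul_assoc, ← mul_pow, inv_mul_cancel₀ (by linarith : (2*R) ≠ 0), one_pow, mul_one]
      _ ≤ C * (2*R)^j := by
          apply mul_le_mul_of_nonneg_right h1 (by positivity)
  -- strong induction
  intro m
  induction m using Nat.strong_induction_on with
  | _ m ih =>
  set K : ℝ := 4*R*C*(2*R)^m with hKdef
  have key : ∀ y : ℝ, 4*R < y → ‖c m‖ ≤ K / y := by
    intro y hy
    have hy0 : (0:ℝ) < y := by linarith
    set z : ℂ := Complex.I * (y:ℂ) with hzdef
    have him : 0 < z.im := by simp [hzdef, Complex.mul_im, hy0]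
    have habs : ‖z‖ = y := by
      simp [hzdef, map_mul, abs_of_pos hy0]
    have hzne : z ≠ 0 := by
      intro hz0
      rw [hz0] at habs
      simp at habs
      linarith
    have h0 := h z him (by rw [habs]; linarith)
    have h1 : HasSum (fun j => c (j + m) * (z⁻¹) ^ (j + m)) 0 := by
      refine (hasSum_nat_add_iff (f := fun j => c j * (z⁻¹)^j) m).mpr ?_
      have hzero : ∑ i ∈ Finset.range m, c i * (z⁻¹)^i = 0 := by
        apply Finset.sum_eq_zero
        intro i hi
        rw [ih i (Finset.mem_range.1 hi), zero_mul]
      rw [hzero, add_zero]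
      exact h0
    have hmul : (z⁻¹)^m * z^m = 1 := by
      rw [← mul_pow, inv_mul_cancel₀ hzne, one_pow]
    have h2 : HasSum (fun j => c (j + m) * (z⁻¹) ^ j) 0 := by
      have h2' := h1.mul_right (z ^ m)
      rw [zero_mul] at h2'
      have hfe : (fun j => c (j + m) * (z⁻¹) ^ (j + m) * z ^ m)
          = fun j => c (j + m) * (z⁻¹) ^ j := by
        funext j
        rw [pow_add, mul_assoc (c (j+m)), mul_assoc ((z⁻¹)^j), hmul, mul_one]
      rwa [hfe] at h2'
    have h3 : HasSum (fun j => c (j + 1 + m) * (z⁻¹) ^ (j+1)) (-(c m)) := by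
      refine (hasSum_nat_add_iff (f := fun j => c (j + m) * (z⁻¹) ^ j) (g := -(c m)) 1).mpr ?_
      simpa using h2
    have hwnorm : ‖z⁻¹‖ = y⁻¹ := by
      rw [norm_inv]
      simp [habs]
    have hq0 : (0:ℝ) ≤ 2*R/y := by positivity
    have hq2 : 2*R/y ≤ 1/2 := by
      rw [div_le_div_iff₀ hy0 (by norm_num : (0:ℝ) < 2)]
      linarith
    set D : ℝ := C * (2*R)^m * (2*R/y) with hDdef
    have hD0 : 0 ≤ D := by positivity
    have hb : ∀ j : ℕ, ‖c (j + 1 + m) * (z⁻¹) ^ (j+1)‖ ≤ D * (1/2)^j := by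
      intro j
      rw [norm_mul, norm_pow, hwnorm]
      calc ‖c (j+1+m)‖ * (y⁻¹)^(j+1)
          ≤ (C * (2*R)^(j+1+m)) * (y⁻¹)^(j+1) := by
            apply mul_le_mul_of_nonneg_right (hC _) (by positivity)
        _ = D * (2*R/y)^j := by
            rw [hDdef]
            ring
        _ ≤ D * (1/2)^j := by
            apply mul_le_mul_of_nonneg_left (pow_le_pow_left₀ hq0 hq2 j) hD0
    have hsb : Summable (fun j : ℕ => D * (1/2)^j) :=
      (summable_geometric_of_lt_one (by norm_num) (by norm_num)).mul_left D
    have hns : Summable (fun j : ℕ => ‖c (j + 1 + m) * (z⁻¹) ^ (j+1)‖) :=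
      Summable.of_nonneg_of_le (fun j => norm_nonneg _) hb hsb
    have htb : ∑' j : ℕ, D * (1/2)^j = D * 2 := by
      rw [tsum_mul_left, tsum_geometric_of_lt_one (by norm_num) (by norm_num)]
      norm_num
    calc ‖c m‖ = ‖-(c m)‖ := (norm_neg _).symm
      _ = ‖∑' j : ℕ, c (j + 1 + m) * (z⁻¹) ^ (j+1)‖ := by rw [h3.tsum_eq]
      _ ≤ ∑' j : ℕ, ‖c (j + 1 + m) * (z⁻¹) ^ (j+1)‖ := norm_tsum_le_tsum_norm hns
      _ ≤ ∑' j : ℕ, D * (1/2)^j := Summable.tsum_le_tsum hb hns hsb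
      _ = D * 2 := htb
      _ = K / y := by rw [hDdef, hKdef]; field_simp; ring
  have htend : Tendsto (fun y : ℝ => K / y) atTop (nhds 0) := by
    simpa [div_eq_mul_inv] using tendsto_inv_atTop_zero.const_mul K
  have hev : ∀ᶠ y in atTop, ‖c m‖ ≤ K / y :=
    eventually_atTop.2 ⟨4*R+1, fun y hy => key y (by linarith)⟩
  have := ge_of_tendsto htend hev
  exact norm_le_zero_iff.1 this


/-- If the Voiculescu transform of a compactly supported probability measure `μ` has
Laurent expansion `φ(z) = Σ_{l≥1} κ_l z^{1−l}` near `∞` with `κ₂ = b > 0` and all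
higher even cumulants vanishing, and `φ` satisfies
`Σ_j A_j φ(z/A_j) = Σ_k B_k φ(z/B_k)` with `Λ₂(2l−1) ≠ 0` for all `l ≥ 2`, then all
higher odd cumulants vanish too, so `φ(z) = κ₁ + b/z` and `μ` is semicircular. -/
theorem stmt16 (n : ℕ) (A B : Fin n → ℝ) (hA : ∀ j, A j ≠ 0) (hB : ∀ j, B j ≠ 0)
    (μ : Measure ℝ) [IsProbabilityMeasure μ]
    (hcomp : ∃ K : Set ℝ, IsCompact K ∧ μ Kᶜ = 0)
    (κ : ℕ → ℝ) (b R : ℝ) (hb : 0 < b) (hκ2 : κ 2 = b)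
    (heven : ∀ l : ℕ, 2 ≤ l → κ (2 * l) = 0)
    (hR : 0 < R) (φ : ℂ → ℂ)
    (hsum : ∀ z : ℂ, R < ‖z‖ →
      HasSum (fun j : ℕ => (κ (j + 1) : ℂ) * z ^ (-(j : ℤ))) (φ z))
    (hφμ : ∀ z : ℂ, 0 < z.im → R < ‖z‖ →
      ∫ t : ℝ, (z + φ z - (t : ℂ))⁻¹ ∂μ = z⁻¹)
    (hfun : ∀ z : ℂ, 0 < z.im → R < ‖z‖ →
      ∑ j, ((A j : ℝ) : ℂ) * φ (z / (A j : ℝ)) =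
      ∑ k, ((B k : ℝ) : ℂ) * φ (z / (B k : ℝ)))
    (hΛ : ∀ l : ℕ, 2 ≤ l →
      (∑ j, (A j) ^ (2 * l - 1)) - (∑ k, (B k) ^ (2 * l - 1)) ≠ 0) :
    (∀ l : ℕ, 2 ≤ l → κ (2 * l - 1) = 0) ∧
    (∀ z : ℂ, R < ‖z‖ → φ z = (κ 1 : ℂ) + (b : ℂ) / z) := by
  -- convert zpow to pow of inverse
  have hzpow : ∀ (w : ℂ) (m : ℕ), w ^ (-(m:ℤ)) = (w⁻¹) ^ m := by
    intro w m
    rw [zpow_neg, zpow_natCast, inv_pow]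
  set M : ℝ := 1 + (∑ j, |A j|) + (∑ k, |B k|) with hMdef
  have hsA : (0:ℝ) ≤ ∑ j, |A j| := Finset.sum_nonneg (fun j _ => abs_nonneg _)
  have hsB : (0:ℝ) ≤ ∑ k, |B k| := Finset.sum_nonneg (fun k _ => abs_nonneg _)
  have hM1 : (1:ℝ) ≤ M := by rw [hMdef]; linarith
  have hMA : ∀ j, |A j| ≤ M := by
    intro j
    have : |A j| ≤ ∑ i, |A i| :=
      Finset.single_le_sum (f := fun i => |A i|) (fun i _ => abs_nonneg _) (Finset.mem_univ j)
    rw [hMdef]; linarith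
  have hMB : ∀ k, |B k| ≤ M := by
    intro k
    have : |B k| ≤ ∑ i, |B i| :=
      Finset.single_le_sum (f := fun i => |B i|) (fun i _ => abs_nonneg _) (Finset.mem_univ k)
    rw [hMdef]; linarith
  have hRM : 0 < R * M := by nlinarith
  -- the coefficient vanishing
  have hc : ∀ m : ℕ,
      ((κ (m+1) * ((∑ j, (A j)^(m+1)) - ∑ k, (B k)^(m+1)) : ℝ) : ℂ) = 0 := by
    apply aux_coeffs_zero _ (R*M) hRM
    intro z him hz
    have hzR : R < ‖z‖ :=
      lt_of_le_of_lt (le_mul_of_one_le_right hR.le hM1) hz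
    have hdiv : ∀ a : ℝ, a ≠ 0 → |a| ≤ M → R < ‖z / (a:ℂ)‖ := by
      intro a ha haM
      rw [norm_div, Complex.norm_real, Real.norm_eq_abs, lt_div_iff₀ (abs_pos.2 ha)]
      calc R * |a| ≤ R * M := mul_le_mul_of_nonneg_left haM hR.le
        _ < ‖z‖ := hz
    have hterm : ∀ (a : ℝ) (m : ℕ),
        (a:ℂ) * ((κ (m+1):ℂ) * (z/(a:ℂ)) ^ (-(m:ℤ)))
          = (κ (m+1):ℂ) * ((a:ℂ)^(m+1) * (z⁻¹)^m) := by
      intro a m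
      rw [hzpow, inv_div, div_eq_mul_inv, mul_pow, pow_succ]
      ring
    have hL : HasSum
        (fun m : ℕ => ∑ j, (A j : ℂ) * ((κ (m+1):ℂ) * (z/(A j:ℂ)) ^ (-(m:ℤ))))
        (∑ j, (A j : ℂ) * φ (z / (A j : ℝ))) :=
      hasSum_sum (fun j _ => ((hsum _ (hdiv _ (hA j) (hMA j))).mul_left _))
    have hRt : HasSum
        (fun m : ℕ => ∑ k, (B k : ℂ) * ((κ (m+1):ℂ) * (z/(B k:ℂ)) ^ (-(m:ℤ))))
        (∑ k, (B k : ℂ) * φ (z / (B k : ℝ))) :=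
      hasSum_sum (fun k _ => ((hsum _ (hdiv _ (hB k) (hMB k))).mul_left _))
    have hsub := hL.sub hRt
    rw [hfun z him hzR, sub_self] at hsub
    have hfe : (fun m : ℕ =>
        (∑ j, (A j : ℂ) * ((κ (m+1):ℂ) * (z/(A j:ℂ)) ^ (-(m:ℤ))))
        - ∑ k, (B k : ℂ) * ((κ (m+1):ℂ) * (z/(B k:ℂ)) ^ (-(m:ℤ))))
        = fun m : ℕ =>
          ((κ (m+1) * ((∑ j, (A j)^(m+1)) - ∑ k, (B k)^(m+1)) : ℝ) : ℂ) * (z⁻¹)^m := by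
      funext m
      simp only [hterm]
      push_cast
      rw [← Finset.mul_sum, ← Finset.mul_sum, ← Finset.sum_mul, ← Finset.sum_mul]
      ring
    rwa [hfe] at hsub
  have part1 : ∀ l : ℕ, 2 ≤ l → κ (2 * l - 1) = 0 := by
    intro l hl
    have h0 := hc (2*l - 2)
    have he : 2*l - 2 + 1 = 2*l - 1 := by omega
    rw [he] at h0
    have hr : κ (2*l-1) * ((∑ j, (A j)^(2*l-1)) - ∑ k, (B k)^(2*l-1)) = 0 := by
      exact_mod_cast h0
    rcases mul_eq_zero.1 hr with h | h
    · exact h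
    · exact absurd h (hΛ l hl)
  refine ⟨part1, ?_⟩
  intro z hz
  have h := hsum z hz
  have hterm0 : ∀ m ∉ ({0, 1} : Finset ℕ), (κ (m+1):ℂ) * z ^ (-(m:ℤ)) = 0 := by
    intro m hm
    have hm2 : 2 ≤ m := by
      simp only [Finset.mem_insert, Finset.mem_singleton] at hm
      omega
    have hκ0 : κ (m+1) = 0 := by
      rcases Nat.even_or_odd (m+1) with ⟨t, ht⟩ | ⟨t, ht⟩
      · have h2 := heven t (by omega)
        rw [two_mul] at h2
        rw [ht]; exact h2
      · have h2 := part1 (t+1) (by omega)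
        have h3 : 2*(t+1) - 1 = 2*t + 1 := by omega
        rw [h3] at h2
        rw [ht]; exact h2
    rw [hκ0]
    simp
  have h2 : HasSum (fun m : ℕ => (κ (m+1):ℂ) * z ^ (-(m:ℤ)))
      (∑ m ∈ ({0,1} : Finset ℕ), (κ (m+1):ℂ) * z ^ (-(m:ℤ))) :=
    hasSum_sum_of_ne_finset_zero hterm0
  rw [h.unique h2, Finset.sum_pair (by norm_num : (0:ℕ) ≠ 1)]
  norm_num [hκ2, div_eq_mul_inv]
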